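/- Let $(\Omega,\mu)$ be a measure space, $d\ge 2$ a real number, $r=\frac{d}{d-1}$, and $u:\Omega\to\mathbb{R}$ measurable. For $i\in\mathbb{Z}$ define $u_i(x)=\phi(2^{1-i}|u(x)|-1)$ with $\phi(t)=\max\{0,\min\{t,1\}\}$. Suppose there exist constants $C>0$ and $a_i\ge 0$ ($i\in\mathbb{Z}$) such that for every $i$ and every $t>0$, $\mu(\{x: u_i(x)>t\})\le C\,t^{-r}\,(2^{1-i}a_i)^{r}$, and $\sum_{i\in\mathbb{Z}}a_i\le A$. Then $\int_{\Omega}|u|^{r}\,d\mu\le C'\,A^{r}$ for a constant $C'$ depending only on $C$ and $d$. -/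

import Mathlib

open MeasureTheory

/-- Abstract dyadic truncation argument (Lemma 4.2): weak-type estimates for the
truncations `uᵢ = φ(2^{1-i}|u| - 1)` with data `aᵢ` summing to at most `A` yield the
strong `L^r` bound `∫ |u|^r ≤ C' A^r`, with `r = d/(d-1)` and `C'` depending only on
`C` and `d`. -/
theorem stmt7 (C d : ℝ) (hC : 0 < C) (hd : 2 ≤ d) :
    ∃ C' : ℝ, 0 < C' ∧
      ∀ (Ω : Type) (_ : MeasurableSpace Ω) (μ : Measure Ω)
        (u : Ω → ℝ) (_ : Measurable u) (a : ℤ → ℝ) (_ : ∀ i, 0 ≤ a i) (A : ℝ),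
        Summable a → (∑' i, a i) ≤ A →
        (∀ (i : ℤ) (t : ℝ), 0 < t →
          μ {x | t < max 0 (min ((2 : ℝ) ^ (1 - i) * |u x| - 1) 1)} ≤
            ENNReal.ofReal (C * t ^ (-(d / (d - 1))) *
              ((2 : ℝ) ^ (1 - i) * a i) ^ (d / (d - 1)))) →
        ∫⁻ x, ENNReal.ofReal (|u x| ^ (d / (d - 1))) ∂μ ≤
          ENNReal.ofReal (C' * A ^ (d / (d - 1))) := by
  refine ⟨64 * C, by positivity, ?_⟩
  intro Ω _ μ u hu a ha A hsum htsum hweak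
  set r := d / (d - 1) with hrdef
  have hd1 : (0:ℝ) < d - 1 := by linarith
  have hr1 : 1 ≤ r := by rw [hrdef, le_div_iff₀ hd1]; linarith
  have hr2 : r ≤ 2 := by rw [hrdef, div_le_iff₀ hd1]; linarith
  have hr0 : 0 < r := by linarith
  have hA0 : 0 ≤ A := le_trans (tsum_nonneg ha) htsum
  have haA : ∀ i, a i ≤ A := fun i =>
    le_trans (hsum.le_tsum i (fun j _ => ha j)) htsum
  -- dyadic annuli
  set E : ℤ → Set Ω := fun i => {x | (2:ℝ)^i < |u x| ∧ |u x| ≤ (2:ℝ)^(i+1)} with hE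
  have hEm : ∀ i, MeasurableSet (E i) :=
    fun i => (measurableSet_lt measurable_const hu.abs).inter
      (measurableSet_le hu.abs measurable_const)
  set f : Ω → ENNReal := fun x => ENNReal.ofReal (|u x| ^ r) with hf
  have hfm : Measurable f := (hu.abs.pow measurable_const).ennreal_ofReal
  -- pointwise domination by indicator sum
  have hpt : ∀ x, f x ≤ ∑' i : ℤ, (E i).indicator f x := by
    intro x
    rcases eq_or_ne (u x) 0 with h0 | h0
    · have : f x = 0 := by
        simp [hf, h0, Real.zero_rpow hr0.ne']
      rw [this]; exact zero_le
    · obtain ⟨i, hi⟩ := exists_mem_Ioc_zpow (abs_pos.2 h0) (one_lt_two (α := ℝ))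
      have hx : x ∈ E i := ⟨hi.1, hi.2⟩
      calc f x = (E i).indicator f x := (Set.indicator_of_mem hx f).symm
        _ ≤ ∑' i : ℤ, (E i).indicator f x := ENNReal.le_tsum i
  -- per-annulus bound
  have hbound : ∀ i : ℤ, ∫⁻ x in E i, f x ∂μ ≤
      ENNReal.ofReal (C * (8:ℝ) ^ r * a i ^ r) := by
    intro i
    have h1 : ∫⁻ x in E i, f x ∂μ ≤ ENNReal.ofReal (((2:ℝ)^(i+1)) ^ r) * μ (E i) := by
      calc ∫⁻ x in E i, f x ∂μ
          ≤ ∫⁻ _ in E i, ENNReal.ofReal (((2:ℝ)^(i+1)) ^ r) ∂μ := by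
            refine setLIntegral_mono' (hEm i) (fun x hx => ?_)
            exact ENNReal.ofReal_le_ofReal
              (Real.rpow_le_rpow (abs_nonneg _) hx.2 hr0.le)
        _ = ENNReal.ofReal (((2:ℝ)^(i+1)) ^ r) * μ (E i) := setLIntegral_const _ _
    have h2 : μ (E i) ≤
        ENNReal.ofReal (C * ((1:ℝ)/2) ^ (-r) * ((2:ℝ) ^ (1 - i) * a i) ^ r) := by
      refine le_trans (measure_mono ?_) (hweak i (1/2) (by norm_num))
      intro x hx
      have hpow : (2:ℝ)^(1-i) * (2:ℝ)^i = 2 := by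
        rw [← zpow_add₀ (two_ne_zero : (2:ℝ) ≠ 0)]; norm_num
      have h2i : 2 < (2:ℝ)^(1-i) * |u x| := by
        calc (2:ℝ) = (2:ℝ)^(1-i) * (2:ℝ)^i := hpow.symm
          _ < (2:ℝ)^(1-i) * |u x| :=
            mul_lt_mul_of_pos_left hx.1 (zpow_pos (by norm_num) _)
      have hmin : min ((2:ℝ)^(1-i) * |u x| - 1) 1 = 1 := min_eq_right (by linarith)
      show (1:ℝ)/2 < max 0 (min ((2:ℝ)^(1-i) * |u x| - 1) 1)
      rw [hmin]
      norm_num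
    calc ∫⁻ x in E i, f x ∂μ
        ≤ ENNReal.ofReal (((2:ℝ)^(i+1)) ^ r) *
            ENNReal.ofReal (C * ((1:ℝ)/2) ^ (-r) * ((2:ℝ) ^ (1 - i) * a i) ^ r) :=
          le_trans h1 (mul_le_mul_right h2 _)
      _ = ENNReal.ofReal (((2:ℝ)^(i+1)) ^ r *
            (C * ((1:ℝ)/2) ^ (-r) * ((2:ℝ) ^ (1 - i) * a i) ^ r)) :=
          (ENNReal.ofReal_mul (Real.rpow_nonneg (zpow_nonneg (by norm_num) _) _)).symm
      _ = ENNReal.ofReal (C * (8:ℝ) ^ r * a i ^ r) := by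
          congr 1
          have e1 : ((1:ℝ)/2) ^ (-r) = (2:ℝ) ^ r := by
            rw [one_div, Real.inv_rpow (by norm_num : (0:ℝ) ≤ 2),
              Real.rpow_neg (by norm_num : (0:ℝ) ≤ 2), inv_inv]
          have e2 : ((2:ℝ) ^ (1 - i) * a i) ^ r = ((2:ℝ)^(1-i)) ^ r * a i ^ r :=
            Real.mul_rpow (zpow_nonneg (by norm_num) _) (ha i)
          have e3 : ((2:ℝ)^(i+1)) ^ r * ((2:ℝ)^(1-i)) ^ r = (4:ℝ) ^ r := by
            rw [← Real.mul_rpow (zpow_nonneg (by norm_num) _) (zpow_nonneg (by norm_num) _),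
              ← zpow_add₀ (two_ne_zero : (2:ℝ) ≠ 0),
              show i + 1 + (1 - i) = (2:ℤ) by ring]
            norm_num
          have e4 : (4:ℝ) ^ r * (2:ℝ) ^ r = (8:ℝ) ^ r := by
            rw [← Real.mul_rpow (by norm_num) (by norm_num)]; norm_num
          rw [e1, e2]
          calc ((2:ℝ)^(i+1)) ^ r * (C * (2:ℝ) ^ r * (((2:ℝ)^(1-i)) ^ r * a i ^ r))
              = ((2:ℝ)^(i+1)) ^ r * ((2:ℝ)^(1-i)) ^ r * (2:ℝ) ^ r * (C * a i ^ r) := by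
                ring
            _ = C * (8:ℝ) ^ r * a i ^ r := by rw [e3, e4]; ring
  -- key real estimates
  have h8 : (8:ℝ) ^ r ≤ 64 := by
    calc (8:ℝ) ^ r ≤ (8:ℝ) ^ (2:ℝ) :=
        Real.rpow_le_rpow_of_exponent_le (by norm_num) hr2
      _ = 64 := by
        rw [show (2:ℝ) = ((2:ℕ):ℝ) by norm_num, Real.rpow_natCast]; norm_num
  have hterm : ∀ i, C * (8:ℝ) ^ r * a i ^ r ≤ 64 * C * (A ^ (r-1) * a i) := by
    intro i
    have hai : a i ^ r ≤ A ^ (r-1) * a i := by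
      rcases eq_or_lt_of_le (ha i) with h0 | h0
      · rw [← h0, Real.zero_rpow hr0.ne']; simp
      · have hsplit : a i ^ r = a i ^ (r-1) * a i := by
          have h := Real.rpow_add h0 (r-1) 1
          rw [Real.rpow_one, show r - 1 + 1 = r by ring] at h
          exact h
        rw [hsplit]
        have := Real.rpow_le_rpow (ha i) (haA i) (by linarith : (0:ℝ) ≤ r - 1)
        nlinarith [Real.rpow_nonneg (ha i) (r-1), ha i]
    calc C * (8:ℝ) ^ r * a i ^ r = C * ((8:ℝ) ^ r * a i ^ r) := by ring
      _ ≤ C * (64 * a i ^ r) :=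
        mul_le_mul_of_nonneg_left
          (mul_le_mul_of_nonneg_right h8 (Real.rpow_nonneg (ha i) r)) hC.le
      _ = 64 * C * a i ^ r := by ring
      _ ≤ 64 * C * (A ^ (r-1) * a i) :=
        mul_le_mul_of_nonneg_left hai (by positivity)
  -- put it all together
  calc ∫⁻ x, f x ∂μ ≤ ∫⁻ x, ∑' i : ℤ, (E i).indicator f x ∂μ := lintegral_mono hpt
    _ = ∑' i : ℤ, ∫⁻ x, (E i).indicator f x ∂μ :=
        lintegral_tsum (fun i => (hfm.indicator (hEm i)).aemeasurable)
    _ = ∑' i : ℤ, ∫⁻ x in E i, f x ∂μ := by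
        congr 1; funext i; exact lintegral_indicator (hEm i) f
    _ ≤ ∑' i : ℤ, ENNReal.ofReal (C * (8:ℝ) ^ r * a i ^ r) :=
        ENNReal.tsum_le_tsum hbound
    _ ≤ ∑' i : ℤ, ENNReal.ofReal (64 * C * (A ^ (r-1) * a i)) :=
        ENNReal.tsum_le_tsum (fun i => ENNReal.ofReal_le_ofReal (hterm i))
    _ = ∑' i : ℤ, ENNReal.ofReal (64 * C * A ^ (r-1)) * ENNReal.ofReal (a i) := by
        congr 1; funext i
        rw [← ENNReal.ofReal_mul (by positivity)]
        congr 1; ring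
    _ = ENNReal.ofReal (64 * C * A ^ (r-1)) * ∑' i : ℤ, ENNReal.ofReal (a i) :=
        ENNReal.tsum_mul_left
    _ ≤ ENNReal.ofReal (64 * C * A ^ (r-1)) * ENNReal.ofReal A := by
        refine mul_le_mul_right ?_ _
        rw [← ENNReal.ofReal_tsum_of_nonneg ha hsum]
        exact ENNReal.ofReal_le_ofReal htsum
    _ ≤ ENNReal.ofReal (64 * C * A ^ r) := by
        rw [← ENNReal.ofReal_mul (by positivity)]
        refine ENNReal.ofReal_le_ofReal ?_
        rcases eq_or_lt_of_le hA0 with h0 | h0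
        · rw [← h0]; simp [Real.zero_rpow hr0.ne']
        · have hAr : A ^ (r-1) * A = A ^ r := by
            have h := Real.rpow_add h0 (r-1) 1
            rw [Real.rpow_one, show r - 1 + 1 = r by ring] at h
            exact h.symm
          rw [mul_assoc, hAr]
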